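/- Fix a real t with t ∉ {−1, 1}. Let L_j = ∫_{−1}^{1} ln|t − s|·P_j(s) ds and C_j = p.v.∫_{−1}^{1} P_j(s)/(t − s) ds with P_j the Legendre polynomial of degree j. Then 3·L_2 = t·(C_2 − C_0) + 2, and for every integer j > 2, (j+1)·L_j = −(j−2)·L_{j−2} + t·(C_j − C_{j−2}). -/

import Mathlib

open Filter Topology MeasureTheory intervalIntegral
open Set

/-- Legendre polynomial of degree `n` (three-term recurrence definition). -/
noncomputable def legendreP : ℕ → ℝ → ℝ
  | 0, _ => 1
  | 1, s => s
  | (n + 2), s =>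
      ((2 * (n : ℝ) + 3) * s * legendreP (n + 1) s - ((n : ℝ) + 1) * legendreP n s) / ((n : ℝ) + 2)

noncomputable def legendreD : ℕ → ℝ → ℝ
  | 0, _ => 0
  | 1, _ => 1
  | (n + 2), s =>
      ((2 * (n : ℝ) + 3) * (legendreP (n + 1) s + s * legendreD (n + 1) s)
        - ((n : ℝ) + 1) * legendreD n s) / ((n : ℝ) + 2)

lemma legendreP_hasDerivAt_aux (n : ℕ) :
    (∀ s, HasDerivAt (legendreP n) (legendreD n s) s) ∧
      (∀ s, HasDerivAt (legendreP (n + 1)) (legendreD (n + 1) s) s) := by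
  induction n with
  | zero =>
    constructor
    · intro s
      have : legendreP 0 = fun _ => (1 : ℝ) := rfl
      rw [this]; exact hasDerivAt_const s 1
    · intro s
      have : legendreP 1 = fun s => s := rfl
      rw [this]; exact hasDerivAt_id' (x := s)
  | succ n ih =>
    refine ⟨ih.2, ?_⟩
    intro s
    have h1 : legendreP (n + 2) = fun s =>
        ((2 * (n : ℝ) + 3) * s * legendreP (n + 1) s - ((n : ℝ) + 1) * legendreP n s)
          / ((n : ℝ) + 2) := rfl
    have h2 : legendreD (n + 2) s =
        ((2 * (n : ℝ) + 3) * (legendreP (n + 1) s + s * legendreD (n + 1) s)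
          - ((n : ℝ) + 1) * legendreD n s) / ((n : ℝ) + 2) := rfl
    rw [h1, h2]
    have hA : HasDerivAt (fun s => (2 * (n : ℝ) + 3) * s * legendreP (n + 1) s)
        ((2 * (n : ℝ) + 3) * (legendreP (n + 1) s + s * legendreD (n + 1) s)) s := by
      have := ((hasDerivAt_id' (x := s)).const_mul (2 * (n : ℝ) + 3)).mul (ih.2 s)
      exact this.congr_deriv (by ring)
    have hB : HasDerivAt (fun s => ((n : ℝ) + 1) * legendreP n s)
        (((n : ℝ) + 1) * legendreD n s) s := (ih.1 s).const_mul _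
    exact (hA.sub hB).div_const _

lemma legendreP_hasDerivAt (n : ℕ) (s : ℝ) :
    HasDerivAt (legendreP n) (legendreD n s) s := (legendreP_hasDerivAt_aux n).1 s

lemma legendreP_continuous (n : ℕ) : Continuous (legendreP n) := by
  have : Differentiable ℝ (legendreP n) := fun s => (legendreP_hasDerivAt n s).differentiableAt
  exact this.continuous

lemma legendreP_one (n : ℕ) : legendreP n 1 = 1 := by
  induction n using Nat.strong_induction_on with
  | _ n ih =>
    match n with
    | 0 => rfl
    | 1 => rfl
    | (m + 2) =>
      have h1 : legendreP (m + 2) 1 =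
          ((2 * (m : ℝ) + 3) * 1 * legendreP (m + 1) 1 - ((m : ℝ) + 1) * legendreP m 1)
            / ((m : ℝ) + 2) := rfl
      rw [h1, ih (m+1) (by omega), ih m (by omega)]
      have : ((m : ℝ) + 2) ≠ 0 := by positivity
      field_simp
      ring

lemma legendreP_negone (n : ℕ) : legendreP n (-1) = (-1) ^ n := by
  induction n using Nat.strong_induction_on with
  | _ n ih =>
    match n with
    | 0 => rfl
    | 1 => simp [legendreP]
    | (m + 2) =>
      have h1 : legendreP (m + 2) (-1) =
          ((2 * (m : ℝ) + 3) * (-1) * legendreP (m + 1) (-1) - ((m : ℝ) + 1) * legendreP m (-1))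
            / ((m : ℝ) + 2) := rfl
      rw [h1, ih (m+1) (by omega), ih m (by omega)]
      have h2 : ((m : ℝ) + 2) ≠ 0 := by positivity
      rw [pow_succ, pow_succ]
      field_simp
      ring

/-- Joint induction: the three classical derivative identities. -/
lemma legendre_identities (n : ℕ) : (∀ s : ℝ,
      legendreD (n + 1) s = ((n : ℝ) + 1) * legendreP n s + s * legendreD n s) ∧
    (∀ s : ℝ, s * legendreD (n + 1) s - legendreD n s = ((n : ℝ) + 1) * legendreP (n + 1) s) ∧
    (∀ s : ℝ, (s ^ 2 - 1) * legendreD (n + 1) s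
      = ((n : ℝ) + 1) * (s * legendreP (n + 1) s - legendreP n s)) := by
  induction n with
  | zero =>
    refine ⟨fun s => by simp [legendreD, legendreP], fun s => ?_, fun s => ?_⟩
    · have hD1 : legendreD 1 s = 1 := rfl
      have hD0 : legendreD 0 s = 0 := rfl
      have hP1 : legendreP 1 s = s := rfl
      rw [hD1, hD0, hP1]; push_cast; ring
    · have hD1 : legendreD 1 s = 1 := rfl
      have hP1 : legendreP 1 s = s := rfl
      have hP0 : legendreP 0 s = 1 := rfl
      rw [hD1, hP1, hP0]; push_cast; ring
  | succ n ih =>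
    obtain ⟨h1, h3, h4⟩ := ih
    have hne : ((n : ℝ) + 2) ≠ 0 := by positivity
    have hrecP : ∀ s : ℝ, ((n : ℝ) + 2) * legendreP (n + 2) s
        = (2 * (n : ℝ) + 3) * s * legendreP (n + 1) s - ((n : ℝ) + 1) * legendreP n s := by
      intro s
      have : legendreP (n + 2) s =
          ((2 * (n : ℝ) + 3) * s * legendreP (n + 1) s - ((n : ℝ) + 1) * legendreP n s)
            / ((n : ℝ) + 2) := rfl
      rw [this]; field_simp
    have hrecD : ∀ s : ℝ, ((n : ℝ) + 2) * legendreD (n + 2) s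
        = (2 * (n : ℝ) + 3) * (legendreP (n + 1) s + s * legendreD (n + 1) s)
          - ((n : ℝ) + 1) * legendreD n s := by
      intro s
      have : legendreD (n + 2) s =
          ((2 * (n : ℝ) + 3) * (legendreP (n + 1) s + s * legendreD (n + 1) s)
            - ((n : ℝ) + 1) * legendreD n s) / ((n : ℝ) + 2) := rfl
      rw [this]; field_simp
    have new1 : ∀ s : ℝ, legendreD (n + 2) s
        = ((n : ℝ) + 2) * legendreP (n + 1) s + s * legendreD (n + 1) s := by
      intro s
      refine mul_left_cancel₀ hne ?_
      linear_combination hrecD s + ((n : ℝ) + 1) * h3 s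
    refine ⟨fun s => by push_cast; linear_combination new1 s, fun s => ?_, fun s => ?_⟩
    · push_cast
      linear_combination s * new1 s + h4 s - hrecP s
    · push_cast
      linear_combination (s ^ 2 - 1) * new1 s + s * h4 s - s * hrecP s

/-- `D_{n+2} - D_n = (2n+3) P_{n+1}`. -/
lemma legendreD_sub (n : ℕ) (s : ℝ) :
    legendreD (n + 2) s - legendreD n s = (2 * (n : ℝ) + 3) * legendreP (n + 1) s := by
  have h1 := (legendre_identities (n + 1)).1 s
  have h3 := (legendre_identities n).2.1 s
  push_cast at h1
  linear_combination h1 + h3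

/-- `P_{n+2} - P_n` has derivative `(2n+3) P_{n+1}` and vanishes at `±1`. -/
lemma legendre_g_hasDerivAt (n : ℕ) (s : ℝ) :
    HasDerivAt (fun s => legendreP (n + 2) s - legendreP n s)
      ((2 * (n : ℝ) + 3) * legendreP (n + 1) s) s := by
  have := (legendreP_hasDerivAt (n + 2) s).sub (legendreP_hasDerivAt n s)
  rwa [legendreD_sub] at this

lemma integral_legendreP_succ (n : ℕ) :
    (∫ s in (-1 : ℝ)..1, legendreP (n + 1) s) = 0 := by
  have hcont : Continuous fun s => (2 * (n : ℝ) + 3) * legendreP (n + 1) s :=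
    continuous_const.mul (legendreP_continuous (n + 1))
  have hftc := intervalIntegral.integral_eq_sub_of_hasDerivAt
    (f := fun s => legendreP (n + 2) s - legendreP n s)
    (fun s _ => legendre_g_hasDerivAt n s)
    (hcont.intervalIntegrable (-1) 1)
  have hval : (∫ s in (-1 : ℝ)..1, (2 * (n : ℝ) + 3) * legendreP (n + 1) s)
      = (2 * (n : ℝ) + 3) * ∫ s in (-1 : ℝ)..1, legendreP (n + 1) s :=
    intervalIntegral.integral_const_mul _ _
  rw [hval] at hftc
  have hne : (2 * (n : ℝ) + 3) ≠ 0 := by positivity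
  have : (2 * (n : ℝ) + 3) * ∫ s in (-1 : ℝ)..1, legendreP (n + 1) s = 0 := by
    rw [hftc]
    rw [legendreP_one, legendreP_one, legendreP_negone, legendreP_negone]
    rw [pow_succ]
    ring
  exact (mul_eq_zero.mp this).resolve_left hne

lemma integral_legendreP_zero : (∫ s in (-1 : ℝ)..1, legendreP 0 s) = 2 := by
  have : legendreP 0 = fun _ => (1 : ℝ) := rfl
  rw [this]
  simp
  norm_num

lemma integrableOn_neg_log_Ioc (c : ℝ) (hc1 : c ≤ 1) :
    IntegrableOn (fun x => -Real.log x) (Ioc 0 c) := by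
  have hcont : ContinuousOn (fun x : ℝ => x - x * Real.log x) (Icc 0 c) :=
    (continuous_id.sub Real.continuous_mul_log).continuousOn
  have hderiv : ∀ x ∈ Ioo (0:ℝ) c, HasDerivAt (fun x : ℝ => x - x * Real.log x)
      (-Real.log x) x := by
    intro x hx
    have hx0 : x ≠ 0 := ne_of_gt hx.1
    have h1 : HasDerivAt (fun x : ℝ => x * Real.log x) (Real.log x + 1) x := by
      have := (hasDerivAt_id x).mul (Real.hasDerivAt_log hx0)
      exact this.congr_deriv (by simp only [id_eq, one_mul, mul_inv_cancel₀ hx0])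
    have := (hasDerivAt_id x).sub h1
    exact this.congr_deriv (by ring)
  have hpos : ∀ x ∈ Ioo (0:ℝ) c, 0 ≤ -Real.log x := by
    intro x hx
    have : Real.log x ≤ 0 := Real.log_nonpos (le_of_lt hx.1) (hx.2.le.trans hc1)
    linarith
  exact intervalIntegral.integrableOn_deriv_of_nonneg hcont hderiv hpos

lemma integrableOn_log_Ioc_zero (c : ℝ) : IntegrableOn Real.log (Ioc 0 c) := by
  rcases le_or_gt c 0 with hc | hc
  · simp [Ioc_eq_empty_of_le hc]
  rcases le_or_gt c 1 with hc1 | hc1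
  · have h := (integrableOn_neg_log_Ioc c hc1).neg
    exact h.congr (Filter.Eventually.of_forall fun x => by simp)
  · have h1 : IntegrableOn Real.log (Ioc 0 1) := by
      have h := (integrableOn_neg_log_Ioc 1 le_rfl).neg
      exact h.congr (Filter.Eventually.of_forall fun x => by simp)
    have h2 : IntegrableOn Real.log (Ioc 1 c) := by
      have hco : ContinuousOn Real.log (Icc 1 c) := Real.continuousOn_log.mono (by
        intro x hx
        simp only [Set.mem_compl_iff, Set.mem_singleton_iff]
        exact ne_of_gt (lt_of_lt_of_le one_pos hx.1))
      exact hco.integrableOn_Icc.mono_set Ioc_subset_Icc_self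
    have hu : Ioc (0:ℝ) 1 ∪ Ioc 1 c = Ioc 0 c := Ioc_union_Ioc_eq_Ioc (by norm_num) hc1.le
    rw [← hu]
    exact h1.union h2

lemma intervalIntegrable_log'' (a b : ℝ) : IntervalIntegrable Real.log volume a b := by
  have h0 : ∀ c : ℝ, IntervalIntegrable Real.log volume 0 c := by
    intro c
    rcases le_or_gt 0 c with hc | hc
    · exact ⟨integrableOn_log_Ioc_zero c, by simp [Ioc_eq_empty_of_le hc]⟩
    · have base : IntervalIntegrable Real.log volume 0 (-c) :=
        ⟨integrableOn_log_Ioc_zero (-c), by simp [Ioc_eq_empty_of_le (by linarith : (0:ℝ) ≤ -c)]⟩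
      have heq : (fun x : ℝ => Real.log (-x)) = Real.log := by
        funext x; exact Real.log_neg_eq_log x
      have h2 : IntervalIntegrable (fun x : ℝ => Real.log (-x)) volume (-0) (-c) := by
        rw [heq, neg_zero]
        exact base
      have := (IntervalIntegrable.iff_comp_neg (f := Real.log) (a := 0) (b := c)).mpr h2
      simpa using this
  exact (h0 a).symm.trans (h0 b)

lemma intervalIntegrable_log_sub (t a b : ℝ) :
    IntervalIntegrable (fun s => Real.log |t - s|) volume a b := by
  have heq : (fun s => Real.log |t - s|) = fun s => Real.log (t - s) := by
    funext s; exact Real.log_abs (t - s)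
  rw [heq]
  simpa using ((intervalIntegrable_log'' (t - b) (t - a)).comp_sub_left t).symm

/-- The truncated integral `∫_{-1}^{1} f(s) 1_{|s-t|>ε} ds`, whose limit as `ε → 0⁺`
is the Cauchy principal value `p.v. ∫_{-1}^{1} f(s) ds` (and the ordinary integral
when `f` has no singularity in `[-1,1]`). -/
noncomputable def pvApprox (t : ℝ) (f : ℝ → ℝ) (ε : ℝ) : ℝ :=
  ∫ s in (-1 : ℝ)..1, if |s - t| ≤ ε then 0 else f s

open Set in
lemma trunc_integrable (t : ℝ) {ε : ℝ} (hε : 0 < ε) (f : ℝ → ℝ)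
    (hf : ∀ s : ℝ, s ≠ t → ContinuousAt f s) :
    IntervalIntegrable (fun s => if |s - t| ≤ ε then 0 else f s) volume (-1) 1 := by
  have hU : IsOpen {s : ℝ | ε < |s - t|} :=
    isOpen_lt continuous_const (continuous_abs.comp (continuous_id.sub continuous_const))
  have hpt : (fun s => if |s - t| ≤ ε then 0 else f s)
      = Set.indicator {s : ℝ | ε < |s - t|} f := by
    funext s
    by_cases h : |s - t| ≤ ε
    · simp [h, Set.indicator_apply, not_lt.mpr h]
    · simp [h, Set.indicator_apply, not_le.mp h]
  rw [hpt, intervalIntegrable_iff]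
  rw [MeasureTheory.IntegrableOn, MeasureTheory.integrable_indicator_iff hU.measurableSet,
    MeasureTheory.IntegrableOn, MeasureTheory.Measure.restrict_restrict hU.measurableSet]
  have hK : IsCompact ({s : ℝ | ε ≤ |s - t|} ∩ Icc (-1) 1) := by
    have hcl : IsClosed {s : ℝ | ε ≤ |s - t|} :=
      isClosed_le continuous_const (continuous_abs.comp (continuous_id.sub continuous_const))
    exact isCompact_Icc.of_isClosed_subset (hcl.inter isClosed_Icc) Set.inter_subset_right
  have hco : ContinuousOn f ({s : ℝ | ε ≤ |s - t|} ∩ Icc (-1) 1) := by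
    intro s hs
    have : s ≠ t := by
      intro h
      rw [h] at hs
      simp at hs
      have := hs.1
      linarith
    exact (hf s this).continuousWithinAt
  have hint : IntegrableOn f ({s : ℝ | ε ≤ |s - t|} ∩ Icc (-1) 1) := hco.integrableOn_compact hK
  apply hint.mono_set
  rw [uIoc_of_le (by norm_num : (-1:ℝ) ≤ 1)]
  intro x hx
  have h1 : ε < |x - t| := hx.1
  have h2 : x ∈ Ioc (-1:ℝ) 1 := hx.2
  exact ⟨h1.le, h2.1.le, h2.2⟩

lemma pvApprox_sub (t : ℝ) (f g : ℝ → ℝ)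
    (hf : ∀ s : ℝ, s ≠ t → ContinuousAt f s) (hg : ∀ s : ℝ, s ≠ t → ContinuousAt g s)
    {ε : ℝ} (hε : 0 < ε) :
    pvApprox t (fun s => f s - g s) ε = pvApprox t f ε - pvApprox t g ε := by
  unfold pvApprox
  rw [← intervalIntegral.integral_sub (trunc_integrable t hε f hf) (trunc_integrable t hε g hg)]
  congr 1
  funext s
  by_cases h : |s - t| ≤ ε <;> simp [h]

lemma split_tendsto {t : ℝ} (ht : t ∈ Ioo (-1:ℝ) 1) (h : ℝ → ℝ)
    (hh : IntervalIntegrable h volume (-1) 1) :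
    Tendsto (fun ε => (∫ s in (-1:ℝ)..(t - ε), h s) + ∫ s in (t + ε)..(1:ℝ), h s)
      (nhdsWithin 0 (Set.Ioi 0)) (nhds (∫ s in (-1:ℝ)..1, h s)) := by
  set F : ℝ → ℝ := fun x => ∫ s in (-1:ℝ)..x, h s with hF
  have hmem : (-1:ℝ) ∈ Set.uIcc (-1:ℝ) 1 := Set.left_mem_uIcc
  have hcF : ContinuousOn F (Set.uIcc (-1:ℝ) 1) :=
    intervalIntegral.continuousOn_primitive_interval' hh hmem
  have huIcc : Set.uIcc (-1:ℝ) 1 = Icc (-1:ℝ) 1 := uIcc_of_le (by norm_num)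
  set δ : ℝ := min (1 - t) (t + 1) with hδ
  have hδ0 : 0 < δ := lt_min (by linarith [ht.2]) (by linarith [ht.1])
  have hmemδ : Set.Ioo (0:ℝ) δ ∈ nhdsWithin (0:ℝ) (Set.Ioi 0) :=
    Ioo_mem_nhdsGT_of_mem ⟨le_rfl, hδ0⟩
  -- eventual equality with F (t-ε) + (F 1 - F (t+ε))
  have hev : ∀ ε ∈ Set.Ioo (0:ℝ) δ,
      (∫ s in (-1:ℝ)..(t - ε), h s) + ∫ s in (t + ε)..(1:ℝ), h s
        = F (t - ε) + (F 1 - F (t + ε)) := by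
    intro ε hε
    have hε1 : -1 < t - ε := by
      have := hε.2; have := min_le_right (1 - t) (t + 1); simp only [hδ] at hε; nlinarith [hε.2, min_le_right (1 - t) (t + 1)]
    have hε2 : t + ε < 1 := by
      nlinarith [hε.2, min_le_left (1 - t) (t + 1)]
    have hsub : Set.uIcc (t + ε) 1 ⊆ Set.uIcc (-1:ℝ) 1 := by
      rw [huIcc, uIcc_of_le hε2.le, huIcc] at *
      intro x hx
      exact ⟨by linarith [hx.1, ht.1, hε.1.le], hx.2⟩
    have hsub2 : Set.uIcc (-1:ℝ) (t + ε) ⊆ Set.uIcc (-1:ℝ) 1 := by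
      rw [huIcc, uIcc_of_le (by linarith [ht.1, hε.1] : (-1:ℝ) ≤ t + ε)]
      intro x hx
      exact ⟨hx.1, by linarith [hx.2]⟩
    have hadd : F (t + ε) + ∫ s in (t + ε)..(1:ℝ), h s = F 1 :=
      intervalIntegral.integral_add_adjacent_intervals (hh.mono_set hsub2) (hh.mono_set hsub)
    have : (∫ s in (t + ε)..(1:ℝ), h s) = F 1 - F (t + ε) := by linarith [hadd]
    rw [this]
  -- limits
  have htIcc : t ∈ Set.uIcc (-1:ℝ) 1 := by
    rw [huIcc]; exact ⟨ht.1.le, ht.2.le⟩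
  have hcFt : ContinuousWithinAt F (Set.uIcc (-1:ℝ) 1) t := hcF t htIcc
  have hmap1 : Tendsto (fun ε : ℝ => t - ε) (nhdsWithin 0 (Set.Ioi 0))
      (nhdsWithin t (Set.uIcc (-1:ℝ) 1)) := by
    rw [tendsto_nhdsWithin_iff]
    constructor
    · have : Tendsto (fun ε : ℝ => t - ε) (nhds 0) (nhds (t - 0)) :=
        (continuous_const.sub continuous_id).tendsto 0
      simpa using this.mono_left nhdsWithin_le_nhds
    · filter_upwards [hmemδ] with ε hε
      rw [huIcc]
      constructor
      · nlinarith [hε.2, min_le_right (1 - t) (t + 1)]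
      · linarith [hε.1, ht.2]
  have hmap2 : Tendsto (fun ε : ℝ => t + ε) (nhdsWithin 0 (Set.Ioi 0))
      (nhdsWithin t (Set.uIcc (-1:ℝ) 1)) := by
    rw [tendsto_nhdsWithin_iff]
    constructor
    · have : Tendsto (fun ε : ℝ => t + ε) (nhds 0) (nhds (t + 0)) :=
        (continuous_const.add continuous_id).tendsto 0
      simpa using this.mono_left nhdsWithin_le_nhds
    · filter_upwards [hmemδ] with ε hε
      rw [huIcc]
      constructor
      · linarith [hε.1, ht.1]
      · nlinarith [hε.2, min_le_left (1 - t) (t + 1)]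
  have h1 : Tendsto (fun ε => F (t - ε)) (nhdsWithin 0 (Set.Ioi 0)) (nhds (F t)) :=
    hcFt.tendsto.comp hmap1
  have h2 : Tendsto (fun ε => F (t + ε)) (nhdsWithin 0 (Set.Ioi 0)) (nhds (F t)) :=
    hcFt.tendsto.comp hmap2
  have hfin : Tendsto (fun ε => F (t - ε) + (F 1 - F (t + ε))) (nhdsWithin 0 (Set.Ioi 0))
      (nhds (F t + (F 1 - F t))) := h1.add (tendsto_const_nhds.sub h2)
  have : F t + (F 1 - F t) = ∫ s in (-1:ℝ)..1, h s := by ring_nf; rfl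
  rw [this] at hfin
  apply hfin.congr'
  filter_upwards [hmemδ] with ε hε
  exact (hev ε hε).symm

lemma ae_ne_point (c : ℝ) : ∀ᵐ x : ℝ, x ≠ c := by
  rw [MeasureTheory.ae_iff]
  have : {x : ℝ | ¬ x ≠ c} = {c} := by
    ext x; simp
  rw [this]
  exact measure_singleton c

lemma pvApprox_eval {t : ℝ} (ht : t ∈ Ioo (-1:ℝ) 1) (f : ℝ → ℝ)
    (hf : ∀ s : ℝ, s ≠ t → ContinuousAt f s)
    {ε : ℝ} (hε : 0 < ε) (hε1 : -1 < t - ε) (hε2 : t + ε < 1) :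
    pvApprox t f ε = (∫ s in (-1:ℝ)..(t - ε), f s) + ∫ s in (t + ε)..(1:ℝ), f s := by
  set h : ℝ → ℝ := fun s => if |s - t| ≤ ε then 0 else f s with hh
  have hint : IntervalIntegrable h volume (-1) 1 := trunc_integrable t hε f hf
  have hsub1 : Set.uIcc (-1:ℝ) (t - ε) ⊆ Set.uIcc (-1:ℝ) 1 := by
    rw [uIcc_of_le hε1.le, uIcc_of_le (by norm_num : (-1:ℝ) ≤ 1)]
    exact Icc_subset_Icc le_rfl (by linarith [ht.2])
  have hsub2 : Set.uIcc (t - ε) (t + ε) ⊆ Set.uIcc (-1:ℝ) 1 := by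
    rw [uIcc_of_le (by linarith : t - ε ≤ t + ε), uIcc_of_le (by norm_num : (-1:ℝ) ≤ 1)]
    exact Icc_subset_Icc hε1.le hε2.le
  have hsub3 : Set.uIcc (t + ε) 1 ⊆ Set.uIcc (-1:ℝ) 1 := by
    rw [uIcc_of_le hε2.le, uIcc_of_le (by norm_num : (-1:ℝ) ≤ 1)]
    exact Icc_subset_Icc (by linarith [ht.1]) le_rfl
  have hi1 := hint.mono_set hsub1
  have hi2 := hint.mono_set hsub2
  have hi3 := hint.mono_set hsub3
  have hsplit1 : (∫ s in (-1:ℝ)..(t-ε), h s) + (∫ s in (t-ε)..(t+ε), h s)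
      = ∫ s in (-1:ℝ)..(t+ε), h s :=
    intervalIntegral.integral_add_adjacent_intervals hi1 hi2
  have hi12 : IntervalIntegrable h volume (-1) (t + ε) := by
    apply hint.mono_set
    rw [uIcc_of_le (by linarith [ht.1] : (-1:ℝ) ≤ t + ε), uIcc_of_le (by norm_num : (-1:ℝ) ≤ 1)]
    exact Icc_subset_Icc le_rfl hε2.le
  have hsplit2 : (∫ s in (-1:ℝ)..(t+ε), h s) + (∫ s in (t+ε)..(1:ℝ), h s)
      = ∫ s in (-1:ℝ)..1, h s :=
    intervalIntegral.integral_add_adjacent_intervals hi12 hi3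
  -- evaluate pieces
  have hmid : (∫ s in (t-ε)..(t+ε), h s) = 0 := by
    have : EqOn h (fun _ => (0:ℝ)) (Set.uIcc (t-ε) (t+ε)) := by
      intro x hx
      rw [uIcc_of_le (by linarith : t - ε ≤ t + ε)] at hx
      have : |x - t| ≤ ε := abs_le.mpr ⟨by linarith [hx.1], by linarith [hx.2]⟩
      simp [hh, this]
    rw [intervalIntegral.integral_congr this]
    simp
  have hleft : (∫ s in (-1:ℝ)..(t-ε), h s) = ∫ s in (-1:ℝ)..(t-ε), f s := by
    apply intervalIntegral.integral_congr_ae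
    filter_upwards [ae_ne_point (t - ε)] with x hx hmem
    rw [uIoc_of_le hε1.le] at hmem
    have hlt : x < t - ε := lt_of_le_of_ne hmem.2 hx
    have : ¬ |x - t| ≤ ε := by
      rw [abs_le]
      push_neg
      intro h'
      linarith
    simp [hh, this]
  have hright : (∫ s in (t+ε)..(1:ℝ), h s) = ∫ s in (t+ε)..(1:ℝ), f s := by
    apply intervalIntegral.integral_congr_ae
    filter_upwards with x hmem
    rw [uIoc_of_le hε2.le] at hmem
    have : ¬ |x - t| ≤ ε := by
      rw [abs_le]
      push_neg
      intro h'
      linarith [hmem.1]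
    simp [hh, this]
  have : pvApprox t f ε = ∫ s in (-1:ℝ)..1, h s := rfl
  rw [this, ← hsplit2, ← hsplit1, hmid, hleft, hright]
  ring

lemma hasDerivAt_log_abs (t s : ℝ) (h : s ≠ t) :
    HasDerivAt (fun s => Real.log |t - s|) (1 / (s - t)) s := by
  have hne : t - s ≠ 0 := fun hc => h (by linarith [sub_eq_zero.mp hc])
  have h1 : HasDerivAt (fun s : ℝ => t - s) (-1) s := by
    exact ((hasDerivAt_const s t).sub (hasDerivAt_id' (x := s))).congr_deriv (by ring)
  have h2 : HasDerivAt (fun s => Real.log (t - s)) ((t - s)⁻¹ * (-1)) s :=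
    (Real.hasDerivAt_log hne).comp s h1
  have heq : (fun s => Real.log |t - s|) = fun s => Real.log (t - s) := by
    funext x; exact Real.log_abs _
  rw [heq]
  have h4 : s - t ≠ 0 := sub_ne_zero.mpr h
  have h3 : (t - s)⁻¹ * (-1) = 1 / (s - t) := by
    field_simp
    ring
  rw [h3] at h2
  exact h2

/-- FTC on an interval avoiding the singularity: `∫ g/(t-s)` in terms of `∫ log|t-s| f`. -/
lemma ftc_combined {t a b : ℝ} (hta : t ∉ Set.uIcc a b) (g f : ℝ → ℝ)
    (hg : ∀ s, HasDerivAt g (f s) s) (hf : Continuous f) :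
    ∫ s in a..b, g s / (t - s)
      = (∫ s in a..b, Real.log |t - s| * f s)
        + ((-(Real.log |t - b|) * g b) - (-(Real.log |t - a|) * g a)) := by
  have hgc : Continuous g := Differentiable.continuous (fun s => (hg s).differentiableAt)
  set F : ℝ → ℝ := fun s => -(Real.log |t - s|) * g s with hFdef
  have hF : ∀ s ∈ Set.uIcc a b,
      HasDerivAt F (g s / (t - s) - Real.log |t - s| * f s) s := by
    intro s hs
    have hst : s ≠ t := fun h => hta (h ▸ hs)
    have := ((hasDerivAt_log_abs t s hst).neg).mul (hg s)
    have h1 : s - t ≠ 0 := sub_ne_zero.mpr hst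
    have h2 : t - s ≠ 0 := fun hc => hst (by linarith [sub_eq_zero.mp hc])
    exact this.congr_deriv (by simp only [Pi.neg_apply]; rw [show t - s = -(s - t) by ring, div_neg]; ring)
  have hint1 : IntervalIntegrable (fun s => g s / (t - s)) volume a b := by
    apply ContinuousOn.intervalIntegrable
    apply hgc.continuousOn.div ((continuous_const.sub continuous_id).continuousOn)
    intro x hx
    have hxt : x ≠ t := fun h => hta (h ▸ hx)
    exact sub_ne_zero.mpr (Ne.symm hxt)
  have hint2 : IntervalIntegrable (fun s => Real.log |t - s| * f s) volume a b :=
    (intervalIntegrable_log_sub t a b).mul_continuousOn hf.continuousOn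
  have hftc := intervalIntegral.integral_eq_sub_of_hasDerivAt hF (hint1.sub hint2)
  rw [intervalIntegral.integral_sub hint1 hint2] at hftc
  have : F b - F a = (-(Real.log |t - b|) * g b) - (-(Real.log |t - a|) * g a) := rfl
  rw [this] at hftc
  linarith [hftc]

/-- FTC for the `(t-s) log|t-s|` weight. -/
lemma ftc_combined2 {t a b : ℝ} (hta : t ∉ Set.uIcc a b) (g f : ℝ → ℝ)
    (hg : ∀ s, HasDerivAt g (f s) s) (hf : Continuous f) :
    ∫ s in a..b, (t - s) * Real.log |t - s| * f s
      = (∫ s in a..b, (Real.log |t - s| + 1) * g s)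
        + ((t - b) * Real.log |t - b| * g b - (t - a) * Real.log |t - a| * g a) := by
  have hgc : Continuous g := Differentiable.continuous (fun s => (hg s).differentiableAt)
  set F : ℝ → ℝ := fun s => (t - s) * Real.log |t - s| * g s with hFdef
  have hF : ∀ s ∈ Set.uIcc a b,
      HasDerivAt F ((t - s) * Real.log |t - s| * f s - (Real.log |t - s| + 1) * g s) s := by
    intro s hs
    have hst : s ≠ t := fun h => hta (h ▸ hs)
    have h2 : t - s ≠ 0 := fun hc => hst (by linarith [sub_eq_zero.mp hc])
    have hphi : HasDerivAt (fun s => (t - s) * Real.log |t - s|)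
        (-(Real.log |t - s|) - 1) s := by
      have hsub : HasDerivAt (fun s : ℝ => t - s) (-1) s := by
        exact ((hasDerivAt_const s t).sub (hasDerivAt_id' (x := s))).congr_deriv (by ring)
      have := hsub.mul (hasDerivAt_log_abs t s hst)
      have h1 : s - t ≠ 0 := sub_ne_zero.mpr hst
      exact this.congr_deriv (by rw [show t - s = -(s - t) by ring, neg_mul, neg_mul, mul_one_div_cancel h1]; ring)
    have := hphi.mul (hg s)
    exact this.congr_deriv (by ring)
  have hint1 : IntervalIntegrable (fun s => (t - s) * Real.log |t - s| * f s) volume a b := by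
    have h := (intervalIntegrable_log_sub t a b).mul_continuousOn
      (((continuous_const.sub continuous_id : Continuous fun s : ℝ => t - s).mul hf).continuousOn)
    have heq : (fun s => Real.log |t - s| * ((t - s) * f s))
        = fun s => (t - s) * Real.log |t - s| * f s := by
      funext x; ring
    have h' : IntervalIntegrable (fun s => Real.log |t - s| * ((t - s) * f s)) volume a b := h
    rwa [heq] at h'
  have hint2 : IntervalIntegrable (fun s => (Real.log |t - s| + 1) * g s) volume a b := by
    have h := ((intervalIntegrable_log_sub t a b).mul_continuousOn hgc.continuousOn).add
      (hgc.intervalIntegrable a b)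
    have heq : (fun s => Real.log |t - s| * g s + g s)
        = fun s => (Real.log |t - s| + 1) * g s := by
      funext x; ring
    rwa [heq] at h
  have hftc := intervalIntegral.integral_eq_sub_of_hasDerivAt hF (hint1.sub hint2)
  rw [intervalIntegral.integral_sub hint1 hint2] at hftc
  have : F b - F a = (t - b) * Real.log |t - b| * g b - (t - a) * Real.log |t - a| * g a := rfl
  rw [this] at hftc
  linarith [hftc]

lemma tendsto_mul_log_zero : Tendsto (fun ε : ℝ => ε * Real.log ε)
    (nhdsWithin 0 (Set.Ioi 0)) (nhds 0) := by
  have h := Real.continuous_mul_log.tendsto 0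
  simp only [Real.log_zero, mul_zero, zero_mul] at h
  exact h.mono_left nhdsWithin_le_nhds

lemma tendsto_slope_side {g : ℝ → ℝ} {t d : ℝ} (hg : HasDerivAt g d t) :
    Tendsto (fun ε : ℝ => (g (t + ε) - g (t - ε)) / ε) (nhdsWithin 0 (Set.Ioi 0))
      (nhds (2 * d)) := by
  have hslope : Tendsto (slope g t) (nhdsWithin t {t}ᶜ) (nhds d) :=
    hasDerivAt_iff_tendsto_slope.mp hg
  have hmap1 : Tendsto (fun ε : ℝ => t + ε) (nhdsWithin 0 (Set.Ioi 0))
      (nhdsWithin t {t}ᶜ) := by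
    rw [tendsto_nhdsWithin_iff]
    constructor
    · have : Tendsto (fun ε : ℝ => t + ε) (nhds 0) (nhds (t + 0)) :=
        (continuous_const.add continuous_id).tendsto 0
      simpa using this.mono_left nhdsWithin_le_nhds
    · filter_upwards [self_mem_nhdsWithin] with ε (hε : 0 < ε)
      simp only [Set.mem_compl_iff, Set.mem_singleton_iff]
      intro h
      nlinarith [h]
  have hmap2 : Tendsto (fun ε : ℝ => t - ε) (nhdsWithin 0 (Set.Ioi 0))
      (nhdsWithin t {t}ᶜ) := by
    rw [tendsto_nhdsWithin_iff]
    constructor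
    · have : Tendsto (fun ε : ℝ => t - ε) (nhds 0) (nhds (t - 0)) :=
        (continuous_const.sub continuous_id).tendsto 0
      simpa using this.mono_left nhdsWithin_le_nhds
    · filter_upwards [self_mem_nhdsWithin] with ε (hε : 0 < ε)
      simp only [Set.mem_compl_iff, Set.mem_singleton_iff]
      intro h
      nlinarith [h]
  have h1 : Tendsto (fun ε : ℝ => slope g t (t + ε)) (nhdsWithin 0 (Set.Ioi 0)) (nhds d) :=
    hslope.comp hmap1
  have h2 : Tendsto (fun ε : ℝ => slope g t (t - ε)) (nhdsWithin 0 (Set.Ioi 0)) (nhds d) :=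
    hslope.comp hmap2
  have hsum := h1.add h2
  have heq : ∀ ε ∈ Set.Ioi (0:ℝ),
      slope g t (t + ε) + slope g t (t - ε) = (g (t + ε) - g (t - ε)) / ε := by
    intro ε hε
    have hε0 : ε ≠ 0 := ne_of_gt hε
    simp only [slope_def_field]
    have e1 : t + ε - t = ε := by ring
    have e2 : t - ε - t = -ε := by ring
    rw [e1, e2, div_neg]
    ring
  have hfin : Tendsto (fun ε : ℝ => (g (t + ε) - g (t - ε)) / ε) (nhdsWithin 0 (Set.Ioi 0))
      (nhds (d + d)) := by
    apply hsum.congr'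
    filter_upwards [self_mem_nhdsWithin] with ε hε
    exact heq ε hε
  have : d + d = 2 * d := by ring
  rwa [this] at hfin

lemma pv_tendsto {t : ℝ} (ht1 : t ≠ 1) (ht2 : t ≠ -1) (g f : ℝ → ℝ)
    (hg : ∀ s, HasDerivAt g (f s) s) (hf : Continuous f)
    (hm : g (-1) = 0) (hp : g 1 = 0) :
    Tendsto (pvApprox t (fun s => g s / (t - s))) (nhdsWithin 0 (Set.Ioi 0))
      (nhds (∫ s in (-1:ℝ)..1, Real.log |t - s| * f s)) := by
  have hgc : Continuous g := Differentiable.continuous (fun s => (hg s).differentiableAt)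
  have hFca : ∀ s : ℝ, s ≠ t → ContinuousAt (fun s => g s / (t - s)) s := by
    intro s hs
    exact (hgc.continuousAt.div ((continuous_const.sub continuous_id).continuousAt)
      (sub_ne_zero.mpr (Ne.symm hs)))
  have hloggint : IntervalIntegrable (fun s => Real.log |t - s| * f s) volume (-1) 1 :=
    (intervalIntegrable_log_sub t (-1) 1).mul_continuousOn hf.continuousOn
  by_cases hio : t ∈ Ioo (-1:ℝ) 1
  · -- interior case
    set δ : ℝ := min (1 - t) (t + 1) with hδ
    have hδ0 : 0 < δ := lt_min (by linarith [hio.2]) (by linarith [hio.1])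
    have hmemδ : Set.Ioo (0:ℝ) δ ∈ nhdsWithin (0:ℝ) (Set.Ioi 0) :=
      Ioo_mem_nhdsGT_of_mem ⟨le_rfl, hδ0⟩
    have hev : ∀ ε ∈ Set.Ioo (0:ℝ) δ,
        pvApprox t (fun s => g s / (t - s)) ε
          = ((∫ s in (-1:ℝ)..(t - ε), Real.log |t - s| * f s)
              + ∫ s in (t + ε)..(1:ℝ), Real.log |t - s| * f s)
            + Real.log ε * (g (t + ε) - g (t - ε)) := by
      intro ε hε
      have hε1 : -1 < t - ε := by
        nlinarith [hε.2, min_le_right (1 - t) (t + 1)]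
      have hε2 : t + ε < 1 := by
        nlinarith [hε.2, min_le_left (1 - t) (t + 1)]
      rw [pvApprox_eval hio _ hFca hε.1 hε1 hε2]
      have hta1 : t ∉ Set.uIcc (-1:ℝ) (t - ε) := by
        rw [uIcc_of_le hε1.le]
        intro hmem
        have := hmem.2
        linarith [hε.1]
      have hta2 : t ∉ Set.uIcc (t + ε) (1:ℝ) := by
        rw [uIcc_of_le hε2.le]
        intro hmem
        have := hmem.1
        linarith [hε.1]
      rw [ftc_combined hta1 g f hg hf, ftc_combined hta2 g f hg hf]
      have e1 : |t - (t - ε)| = ε := by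
        rw [show t - (t - ε) = ε by ring, abs_of_pos hε.1]
      have e2 : |t - (t + ε)| = ε := by
        rw [show t - (t + ε) = -ε by ring, abs_neg, abs_of_pos hε.1]
      rw [e1, e2, hm, hp]
      ring
    have hZ : Tendsto (fun ε : ℝ => Real.log ε * (g (t + ε) - g (t - ε)))
        (nhdsWithin 0 (Set.Ioi 0)) (nhds 0) := by
      have hprod := tendsto_mul_log_zero.mul (tendsto_slope_side (hg t))
      rw [zero_mul] at hprod
      apply hprod.congr'
      filter_upwards [self_mem_nhdsWithin] with ε (hε : 0 < ε)
      have hε0 : ε ≠ 0 := ne_of_gt hε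
      field_simp
    have hmain := (split_tendsto hio _ hloggint).add hZ
    rw [add_zero] at hmain
    apply hmain.congr'
    filter_upwards [hmemδ] with ε hε
    exact (hev ε hε).symm
  · -- exterior case
    have htout : 1 < t ∨ t < -1 := by
      rcases lt_trichotomy t 1 with h | h | h
      · rcases lt_trichotomy t (-1) with h' | h' | h'
        · right; exact h'
        · exact absurd h' ht2
        · exact absurd ⟨h', h⟩ hio
      · exact absurd h ht1
      · left; exact h
    set δ : ℝ := if 1 < t then t - 1 else -1 - t with hδ
    have hδ0 : 0 < δ := by
      rcases htout with h | h
      · rw [hδ, if_pos h]; linarith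
      · rw [hδ, if_neg (by linarith : ¬ 1 < t)]; linarith
    have hdist : ∀ s ∈ Set.Icc (-1:ℝ) 1, δ ≤ |s - t| := by
      intro s hs
      rcases htout with h | h
      · rw [hδ, if_pos h, abs_of_neg (by linarith [hs.2] : s - t < 0)]
        linarith [hs.2]
      · rw [hδ, if_neg (by linarith : ¬ 1 < t), abs_of_pos (by linarith [hs.1] : 0 < s - t)]
        linarith [hs.1]
    have hmemδ : Set.Ioo (0:ℝ) δ ∈ nhdsWithin (0:ℝ) (Set.Ioi 0) :=
      Ioo_mem_nhdsGT_of_mem ⟨le_rfl, hδ0⟩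
    have hta : t ∉ Set.uIcc (-1:ℝ) 1 := by
      rw [uIcc_of_le (by norm_num : (-1:ℝ) ≤ 1)]
      intro hmem
      rcases htout with h | h
      · linarith [hmem.2]
      · linarith [hmem.1]
    have hval : (∫ s in (-1:ℝ)..1, g s / (t - s))
        = ∫ s in (-1:ℝ)..1, Real.log |t - s| * f s := by
      rw [ftc_combined hta g f hg hf, hm, hp]
      ring
    have hev : ∀ ε ∈ Set.Ioo (0:ℝ) δ,
        pvApprox t (fun s => g s / (t - s)) ε = ∫ s in (-1:ℝ)..1, Real.log |t - s| * f s := by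
      intro ε hε
      rw [← hval]
      unfold pvApprox
      apply intervalIntegral.integral_congr
      intro x hx
      rw [uIcc_of_le (by norm_num : (-1:ℝ) ≤ 1)] at hx
      have : ¬ |x - t| ≤ ε := by
        push_neg
        calc ε < δ := hε.2
          _ ≤ |x - t| := hdist x hx
      simp [this]
    apply Tendsto.congr' _ tendsto_const_nhds
    filter_upwards [hmemδ] with ε hε
    exact (hev ε hε).symm

lemma integral_tlog {t : ℝ} (ht1 : t ≠ 1) (ht2 : t ≠ -1) (g f : ℝ → ℝ)
    (hg : ∀ s, HasDerivAt g (f s) s) (hf : Continuous f)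
    (hm : g (-1) = 0) (hp : g 1 = 0) :
    ∫ s in (-1:ℝ)..1, (t - s) * Real.log |t - s| * f s
      = ∫ s in (-1:ℝ)..1, (Real.log |t - s| + 1) * g s := by
  have hgc : Continuous g := Differentiable.continuous (fun s => (hg s).differentiableAt)
  have hint1 : IntervalIntegrable (fun s => (t - s) * Real.log |t - s| * f s) volume (-1) 1 := by
    have h := (intervalIntegrable_log_sub t (-1) 1).mul_continuousOn
      (((continuous_const.sub continuous_id : Continuous fun s : ℝ => t - s).mul hf).continuousOn)
    have heq : (fun s => Real.log |t - s| * ((t - s) * f s))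
        = fun s => (t - s) * Real.log |t - s| * f s := by
      funext x; ring
    have h' : IntervalIntegrable (fun s => Real.log |t - s| * ((t - s) * f s)) volume (-1) 1 := h
    rwa [heq] at h'
  have hint2 : IntervalIntegrable (fun s => (Real.log |t - s| + 1) * g s) volume (-1) 1 := by
    have h := ((intervalIntegrable_log_sub t (-1) 1).mul_continuousOn hgc.continuousOn).add
      (hgc.intervalIntegrable (-1) 1)
    have heq : (fun s => Real.log |t - s| * g s + g s)
        = fun s => (Real.log |t - s| + 1) * g s := by
      funext x; ring
    rwa [heq] at h
  by_cases hio : t ∈ Ioo (-1:ℝ) 1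
  · set δ : ℝ := min (1 - t) (t + 1) with hδ
    have hδ0 : 0 < δ := lt_min (by linarith [hio.2]) (by linarith [hio.1])
    have hmemδ : Set.Ioo (0:ℝ) δ ∈ nhdsWithin (0:ℝ) (Set.Ioi 0) :=
      Ioo_mem_nhdsGT_of_mem ⟨le_rfl, hδ0⟩
    set Φ : ℝ → ℝ := fun ε => (∫ s in (-1:ℝ)..(t - ε), (t - s) * Real.log |t - s| * f s)
      + ∫ s in (t + ε)..(1:ℝ), (t - s) * Real.log |t - s| * f s with hΦ
    have hA : Tendsto Φ (nhdsWithin 0 (Set.Ioi 0))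
        (nhds (∫ s in (-1:ℝ)..1, (t - s) * Real.log |t - s| * f s)) :=
      split_tendsto hio _ hint1
    -- second evaluation of Φ
    have hev : ∀ ε ∈ Set.Ioo (0:ℝ) δ,
        Φ ε = ((∫ s in (-1:ℝ)..(t - ε), (Real.log |t - s| + 1) * g s)
            + ∫ s in (t + ε)..(1:ℝ), (Real.log |t - s| + 1) * g s)
          + (ε * Real.log ε) * (g (t - ε) + g (t + ε)) := by
      intro ε hε
      have hε1 : -1 < t - ε := by
        nlinarith [hε.2, min_le_right (1 - t) (t + 1)]
      have hε2 : t + ε < 1 := by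
        nlinarith [hε.2, min_le_left (1 - t) (t + 1)]
      have hta1 : t ∉ Set.uIcc (-1:ℝ) (t - ε) := by
        rw [uIcc_of_le hε1.le]
        intro hmem
        linarith [hmem.2, hε.1]
      have hta2 : t ∉ Set.uIcc (t + ε) (1:ℝ) := by
        rw [uIcc_of_le hε2.le]
        intro hmem
        linarith [hmem.1, hε.1]
      rw [hΦ]
      simp only []
      rw [ftc_combined2 hta1 g f hg hf, ftc_combined2 hta2 g f hg hf]
      have e1 : |t - (t - ε)| = ε := by
        rw [show t - (t - ε) = ε by ring, abs_of_pos hε.1]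
      have e2 : |t - (t + ε)| = ε := by
        rw [show t - (t + ε) = -ε by ring, abs_neg, abs_of_pos hε.1]
      rw [e1, e2, hm, hp]
      ring
    have hW : Tendsto (fun ε : ℝ => (ε * Real.log ε) * (g (t - ε) + g (t + ε)))
        (nhdsWithin 0 (Set.Ioi 0)) (nhds 0) := by
      have hg1 : Tendsto (fun ε : ℝ => g (t - ε)) (nhdsWithin 0 (Set.Ioi 0)) (nhds (g t)) := by
        have hmap : Tendsto (fun ε : ℝ => t - ε) (nhds 0) (nhds (t - 0)) :=
          (continuous_const.sub continuous_id).tendsto 0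
        have := (hgc.continuousAt (x := t)).tendsto.comp (by simpa using hmap)
        exact this.mono_left nhdsWithin_le_nhds
      have hg2 : Tendsto (fun ε : ℝ => g (t + ε)) (nhdsWithin 0 (Set.Ioi 0)) (nhds (g t)) := by
        have hmap : Tendsto (fun ε : ℝ => t + ε) (nhds 0) (nhds (t + 0)) :=
          (continuous_const.add continuous_id).tendsto 0
        have := (hgc.continuousAt (x := t)).tendsto.comp (by simpa using hmap)
        exact this.mono_left nhdsWithin_le_nhds
      have := tendsto_mul_log_zero.mul (hg1.add hg2)
      rwa [zero_mul] at this
    have hB : Tendsto Φ (nhdsWithin 0 (Set.Ioi 0))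
        (nhds (∫ s in (-1:ℝ)..1, (Real.log |t - s| + 1) * g s)) := by
      have hsplit := (split_tendsto hio _ hint2).add hW
      rw [add_zero] at hsplit
      apply hsplit.congr'
      filter_upwards [hmemδ] with ε hε
      exact (hev ε hε).symm
    exact tendsto_nhds_unique hA hB
  · have htout : 1 < t ∨ t < -1 := by
      rcases lt_trichotomy t 1 with h | h | h
      · rcases lt_trichotomy t (-1) with h' | h' | h'
        · right; exact h'
        · exact absurd h' ht2
        · exact absurd ⟨h', h⟩ hio
      · exact absurd h ht1
      · left; exact h
    have hta : t ∉ Set.uIcc (-1:ℝ) 1 := by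
      rw [uIcc_of_le (by norm_num : (-1:ℝ) ≤ 1)]
      intro hmem
      rcases htout with h | h
      · linarith [hmem.2]
      · linarith [hmem.1]
    rw [ftc_combined2 hta g f hg hf, hm, hp]
    ring

lemma legendreP_rec (n : ℕ) (s : ℝ) :
    ((n:ℝ) + 2) * legendreP (n + 2) s
      = (2 * (n:ℝ) + 3) * s * legendreP (n + 1) s - ((n:ℝ) + 1) * legendreP n s := by
  have h : legendreP (n + 2) s =
      ((2 * (n : ℝ) + 3) * s * legendreP (n + 1) s - ((n : ℝ) + 1) * legendreP n s)
        / ((n : ℝ) + 2) := rfl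
  rw [h]
  field_simp

lemma key_identity {t : ℝ} (ht1 : t ≠ 1) (ht2 : t ≠ -1) (C : ℕ → ℝ)
    (hC : ∀ j : ℕ, Tendsto (pvApprox t (fun s => legendreP j s / (t - s)))
      (nhdsWithin 0 (Set.Ioi 0)) (nhds (C j))) (n : ℕ) :
    t * (C (n + 2) - C n)
      = ((n:ℝ) + 3) * (∫ s in (-1:ℝ)..1, Real.log |t - s| * legendreP (n + 2) s)
        + (n:ℝ) * (∫ s in (-1:ℝ)..1, Real.log |t - s| * legendreP n s)
        + ((∫ s in (-1:ℝ)..1, legendreP (n + 2) s) - ∫ s in (-1:ℝ)..1, legendreP n s) := by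
  set g : ℝ → ℝ := fun s => legendreP (n + 2) s - legendreP n s with hgdef
  set f : ℝ → ℝ := fun s => (2 * (n:ℝ) + 3) * legendreP (n + 1) s with hfdef
  have hgd : ∀ s, HasDerivAt g (f s) s := fun s => legendre_g_hasDerivAt n s
  have hfc : Continuous f := continuous_const.mul (legendreP_continuous (n + 1))
  have hm : g (-1) = 0 := by
    simp only [hgdef, legendreP_negone]
    rw [pow_succ, pow_succ]
    ring
  have hp : g 1 = 0 := by
    simp only [hgdef, legendreP_one]
    ring
  -- Step A/B/C/D : C (n+2) - C n = ∫ log |t-s| f s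
  have hpv := pv_tendsto ht1 ht2 g f hgd hfc hm hp
  have hsub := (hC (n + 2)).sub (hC n)
  have hPf : ∀ m : ℕ, ∀ s : ℝ, s ≠ t → ContinuousAt (fun s => legendreP m s / (t - s)) s := by
    intro m s hs
    exact ((legendreP_continuous m).continuousAt.div
      ((continuous_const.sub continuous_id).continuousAt) (sub_ne_zero.mpr (Ne.symm hs)))
  have hevsub : ∀ ε ∈ Set.Ioi (0:ℝ),
      pvApprox t (fun s => legendreP (n + 2) s / (t - s)) ε
        - pvApprox t (fun s => legendreP n s / (t - s)) ε
      = pvApprox t (fun s => g s / (t - s)) ε := by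
    intro ε hε
    rw [← pvApprox_sub t _ _ (hPf (n + 2)) (hPf n) hε]
    congr 1
    funext s
    rw [div_sub_div_same]
  have hCd : Tendsto (pvApprox t (fun s => g s / (t - s))) (nhdsWithin 0 (Set.Ioi 0))
      (nhds (C (n + 2) - C n)) := by
    apply hsub.congr'
    filter_upwards [self_mem_nhdsWithin] with ε hε
    exact hevsub ε hε
  have hD : C (n + 2) - C n = ∫ s in (-1:ℝ)..1, Real.log |t - s| * f s :=
    tendsto_nhds_unique hCd hpv
  -- Step E : ∫ (t-s) log f = I2 - I0 + (∫P2 - ∫P0)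
  have hIi : ∀ m : ℕ, IntervalIntegrable (fun s => Real.log |t - s| * legendreP m s)
      volume (-1) 1 := fun m =>
    (intervalIntegrable_log_sub t (-1) 1).mul_continuousOn (legendreP_continuous m).continuousOn
  have hPi : ∀ m : ℕ, IntervalIntegrable (legendreP m) volume (-1) 1 := fun m =>
    (legendreP_continuous m).intervalIntegrable (-1) 1
  have hE := integral_tlog ht1 ht2 g f hgd hfc hm hp
  have hE2 : (∫ s in (-1:ℝ)..1, (Real.log |t - s| + 1) * g s)
      = ((∫ s in (-1:ℝ)..1, Real.log |t - s| * legendreP (n + 2) s)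
          - ∫ s in (-1:ℝ)..1, Real.log |t - s| * legendreP n s)
        + ((∫ s in (-1:ℝ)..1, legendreP (n + 2) s) - ∫ s in (-1:ℝ)..1, legendreP n s) := by
    have heq : (fun s => (Real.log |t - s| + 1) * g s)
        = fun s => (Real.log |t - s| * legendreP (n + 2) s + legendreP (n + 2) s)
            - (Real.log |t - s| * legendreP n s + legendreP n s) := by
      funext s
      simp only [hgdef]
      ring
    rw [heq, intervalIntegral.integral_sub ((hIi (n+2)).add (hPi (n+2)))
      ((hIi n).add (hPi n)), intervalIntegral.integral_add (hIi (n+2)) (hPi (n+2)),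
      intervalIntegral.integral_add (hIi n) (hPi n)]
    ring
  -- Step F : t * ∫ log f = ∫ (t-s) log f + (n+2) I2 + (n+1) I0
  have hJint : IntervalIntegrable (fun s => (t - s) * Real.log |t - s| * f s) volume (-1) 1 := by
    have h := (intervalIntegrable_log_sub t (-1) 1).mul_continuousOn
      (((continuous_const.sub continuous_id : Continuous fun s : ℝ => t - s).mul hfc).continuousOn)
    have heq : (fun s => Real.log |t - s| * ((t - s) * f s))
        = fun s => (t - s) * Real.log |t - s| * f s := by
      funext x; ring
    have h' : IntervalIntegrable (fun s => Real.log |t - s| * ((t - s) * f s)) volume (-1) 1 := h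
    rwa [heq] at h'
  have hF : t * (∫ s in (-1:ℝ)..1, Real.log |t - s| * f s)
      = (∫ s in (-1:ℝ)..1, (t - s) * Real.log |t - s| * f s)
        + (((n:ℝ) + 2) * (∫ s in (-1:ℝ)..1, Real.log |t - s| * legendreP (n + 2) s)
          + ((n:ℝ) + 1) * ∫ s in (-1:ℝ)..1, Real.log |t - s| * legendreP n s) := by
    rw [← intervalIntegral.integral_const_mul, ← intervalIntegral.integral_const_mul,
      ← intervalIntegral.integral_const_mul,
      ← intervalIntegral.integral_add ((hIi (n+2)).const_mul _) ((hIi n).const_mul _),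
      ← intervalIntegral.integral_add hJint (((hIi (n+2)).const_mul _).add ((hIi n).const_mul _))]
    apply intervalIntegral.integral_congr
    intro s _
    have hrec := legendreP_rec n s
    simp only [hfdef]
    linear_combination (-Real.log |t - s|) * hrec
  rw [hD, hF, hE, hE2]
  ring
/-- With `L_j = ∫_{-1}^1 ln|t−s| P_j(s) ds` and `C_j = p.v.∫_{-1}^1 P_j(s)/(t−s) ds`:
`3·L₂ = t·(C₂ − C₀) + 2`, and for every `j > 2`,
`(j+1)·L_j = −(j−2)·L_{j−2} + t·(C_j − C_{j−2})`. -/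
theorem log_integral_recursion (t : ℝ) (ht1 : t ≠ 1) (ht2 : t ≠ -1) (C : ℕ → ℝ)
    (hC : ∀ j : ℕ, Tendsto (pvApprox t (fun s => legendreP j s / (t - s)))
      (nhdsWithin 0 (Set.Ioi 0)) (nhds (C j)))
    (L : ℕ → ℝ) (hL : ∀ j : ℕ, L j = ∫ s in (-1 : ℝ)..1, Real.log |t - s| * legendreP j s) :
    3 * L 2 = t * (C 2 - C 0) + 2 ∧
      ∀ j : ℕ, 2 < j →
        ((j : ℝ) + 1) * L j = -((j : ℝ) - 2) * L (j - 2) + t * (C j - C (j - 2)) := by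

  constructor
  · have hk := key_identity ht1 ht2 C hC 0
    rw [integral_legendreP_succ 1, integral_legendreP_zero] at hk
    rw [hL 2]
    push_cast at hk
    linarith [hk]
  · intro j hj
    obtain ⟨n, rfl⟩ : ∃ n, j = n + 3 := ⟨j - 3, by omega⟩
    have hk := key_identity ht1 ht2 C hC (n + 1)
    rw [integral_legendreP_succ (n + 2), integral_legendreP_succ n] at hk
    have hj2 : n + 3 - 2 = n + 1 := by omega
    rw [hj2, hL (n + 3), hL (n + 1)]
    have hcast : ((n + 3 : ℕ) : ℝ) = (n : ℝ) + 3 := by push_cast; ring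
    rw [hcast]
    push_cast at hk
    have e1 : n + 1 + 2 = n + 3 := by omega
    rw [e1] at hk
    linarith [hk]
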